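/- Fix θ > 0 and define the symplectic pairing σ(x,y) = (2/θ)·(x₁y₂ − x₂y₁ + x₃y₄ − x₄y₃) for x, y ∈ ℝ⁴, and for z₁,…,z_r ∈ ℝ⁴ the rosette phase Φ_r(z) = Σ_{1≤i<j≤r} (−1)^{i+j+1} σ(z_i, z_j). Let 1 ≤ p < p′ ≤ r with p + p′ odd, and suppose the alternating sum of the variables strictly between the two ends vanishes: Σ_{k=p+1}^{p′−1} (−1)^{k+1} z_k = 0. Then for every h ∈ ℝ⁴, if z′ is obtained from z by replacing z_p by z_p + h and z_{p′} by z_{p′} + h (all other entries unchanged), one has Φ_r(z′) = Φ_r(z) + (−1)^{p+p′+1}·σ( z_p − z_{p′} , h ). -/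

import Mathlib

open Finset

/-- The symplectic pairing `x·θ⁻¹·y` on `ℝ⁴`. -/
noncomputable def symplecticPairing (θ : ℝ) (x y : EuclideanSpace ℝ (Fin 4)) : ℝ :=
  (2 / θ) * (x 0 * y 1 - x 1 * y 0 + x 2 * y 3 - x 3 * y 2)

/-- The rosette phase `Σ_{1≤i<j≤r} (−1)^{i+j+1} z_i θ⁻¹ z_j`. -/
noncomputable def rosettePhase (θ : ℝ) (r : ℕ) (z : ℕ → EuclideanSpace ℝ (Fin 4)) : ℝ :=
  ∑ i ∈ Finset.Icc 1 r, ∑ j ∈ Finset.Icc (i + 1) r,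
    (-1 : ℝ) ^ (i + j + 1) * symplecticPairing θ (z i) (z j)

lemma sp_swap (θ : ℝ) (x y : EuclideanSpace ℝ (Fin 4)) :
    symplecticPairing θ x y = -symplecticPairing θ y x := by
  simp only [symplecticPairing]; ring

lemma sp_add_right (θ : ℝ) (x y w : EuclideanSpace ℝ (Fin 4)) :
    symplecticPairing θ x (y + w) = symplecticPairing θ x y + symplecticPairing θ x w := by
  simp only [symplecticPairing, PiLp.add_apply]; ring

lemma sp_zero_right (θ : ℝ) (x : EuclideanSpace ℝ (Fin 4)) :
    symplecticPairing θ x 0 = 0 := by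
  simp only [symplecticPairing, PiLp.zero_apply]; ring

lemma sp_smul_right (θ : ℝ) (c : ℝ) (x y : EuclideanSpace ℝ (Fin 4)) :
    symplecticPairing θ x (c • y) = c * symplecticPairing θ x y := by
  simp only [symplecticPairing, PiLp.smul_apply, smul_eq_mul]; ring

lemma sp_sum_right (θ : ℝ) (x : EuclideanSpace ℝ (Fin 4)) (s : Finset ℕ)
    (f : ℕ → EuclideanSpace ℝ (Fin 4)) :
    symplecticPairing θ x (∑ k ∈ s, f k) = ∑ k ∈ s, symplecticPairing θ x (f k) := by
  classical
  induction s using Finset.induction with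
  | empty => simp [sp_zero_right]
  | insert _ _ hns ih =>
      rw [Finset.sum_insert hns, Finset.sum_insert hns, sp_add_right, ih]

lemma sum_ite_prop {P : Prop} [Decidable P] (s : Finset ℕ) (f : ℕ → ℝ) :
    (∑ j ∈ s, if P then f j else 0) = if P then ∑ j ∈ s, f j else 0 := by
  split_ifs <;> simp

/-- The second Filk move: for a well-oriented loop line of the rosette joining
positions `p` and `p'` which arches over an alternating sum of variables equal to
zero, shifting both ends by the same `h` changes the rosette phase only through
the short variable `z_p − z_{p'}`. -/
theorem second_filk_move (θ : ℝ) (hθ : 0 < θ) (r p p' : ℕ)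
    (hp : 1 ≤ p) (hpp' : p < p') (hp'r : p' ≤ r) (hodd : Odd (p + p'))
    (z : ℕ → EuclideanSpace ℝ (Fin 4))
    (hsum : ∑ k ∈ Finset.Icc (p + 1) (p' - 1), ((-1 : ℝ) ^ (k + 1)) • z k = 0)
    (h : EuclideanSpace ℝ (Fin 4)) :
    rosettePhase θ r (Function.update (Function.update z p (z p + h)) p' (z p' + h))
      = rosettePhase θ r z + (-1 : ℝ) ^ (p + p' + 1) * symplecticPairing θ (z p - z p') h := by
  classical
  have hne : p ≠ p' := Nat.ne_of_lt hpp'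
  obtain ⟨m, hm⟩ := hodd
  -- parity flip lemmas
  have hflip : ∀ i : ℕ, ((-1 : ℝ)) ^ (i + p' + 1) = -((-1 : ℝ)) ^ (i + p + 1) := by
    intro i
    have hxy : ((-1 : ℝ)) ^ (i + p + 1) * ((-1 : ℝ)) ^ (i + p' + 1) = -1 := by
      rw [← pow_add]
      exact Odd.neg_one_pow ⟨i + 1 + m, by omega⟩
    have hxx : ((-1 : ℝ)) ^ (i + p + 1) * ((-1 : ℝ)) ^ (i + p + 1) = 1 := by
      rw [← pow_add]
      exact Even.neg_one_pow ⟨i + p + 1, rfl⟩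
    linear_combination ((-1 : ℝ)) ^ (i + p + 1) * hxy - ((-1 : ℝ)) ^ (i + p' + 1) * hxx
  set w := Function.update (Function.update z p (z p + h)) p' (z p' + h) with hw
  -- pointwise expansion of each summand
  have key : ∀ i ∈ Finset.Icc 1 r, ∀ j ∈ Finset.Icc (i + 1) r,
      (-1 : ℝ) ^ (i + j + 1) * symplecticPairing θ (w i) (w j)
        = (-1 : ℝ) ^ (i + j + 1) * symplecticPairing θ (z i) (z j)
          + ((if j = p then (-1 : ℝ) ^ (i + p + 1) * symplecticPairing θ (z i) h else 0)
          + (if j = p' then (-1 : ℝ) ^ (i + p' + 1) * symplecticPairing θ (z i) h else 0)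
          + (if i = p then (-1 : ℝ) ^ (p + j + 1) * symplecticPairing θ h (z j) else 0)
          + (if i = p' then (-1 : ℝ) ^ (p' + j + 1) * symplecticPairing θ h (z j) else 0)) := by
    intro i hi j hj
    simp only [Finset.mem_Icc] at hi hj
    simp only [hw, Function.update_apply]
    split_ifs <;>
      first
        | omega
        | (subst_vars; simp only [symplecticPairing, PiLp.add_apply]; ring)
  have hpr : p ≤ r := le_trans hpp'.le hp'r
  have hp'1 : 1 ≤ p' := le_trans hp hpp'.le
  have expand : rosettePhase θ r w
      = rosettePhase θ r z
        + ((∑ i ∈ Finset.Icc 1 r, if p ∈ Finset.Icc (i + 1) r then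
              (-1 : ℝ) ^ (i + p + 1) * symplecticPairing θ (z i) h else 0)
        + (∑ i ∈ Finset.Icc 1 r, if p' ∈ Finset.Icc (i + 1) r then
              (-1 : ℝ) ^ (i + p' + 1) * symplecticPairing θ (z i) h else 0)
        + (∑ j ∈ Finset.Icc (p + 1) r, (-1 : ℝ) ^ (p + j + 1) * symplecticPairing θ h (z j))
        + (∑ j ∈ Finset.Icc (p' + 1) r, (-1 : ℝ) ^ (p' + j + 1) * symplecticPairing θ h (z j))) := by
    unfold rosettePhase
    rw [Finset.sum_congr rfl (fun i hi => Finset.sum_congr rfl (key i hi))]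
    simp only [Finset.sum_add_distrib, sum_ite_prop, Finset.sum_ite_eq']
    rw [if_pos (Finset.mem_Icc.mpr ⟨hp, hpr⟩), if_pos (Finset.mem_Icc.mpr ⟨hp'1, hp'r⟩)]
  have hS1 : (∑ i ∈ Finset.Icc 1 r, if p ∈ Finset.Icc (i + 1) r then
        (-1 : ℝ) ^ (i + p + 1) * symplecticPairing θ (z i) h else 0)
      = ∑ i ∈ Finset.Ico 1 p, (-1 : ℝ) ^ (i + p + 1) * symplecticPairing θ (z i) h := by
    have hsub : Finset.Ico 1 p ⊆ Finset.Icc 1 r := by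
      intro x hx
      simp only [Finset.mem_Ico] at hx
      exact Finset.mem_Icc.mpr ⟨hx.1, by omega⟩
    have hz0 : ∀ x ∈ Finset.Icc 1 r, x ∉ Finset.Ico 1 p →
        (if p ∈ Finset.Icc (x + 1) r then
          (-1 : ℝ) ^ (x + p + 1) * symplecticPairing θ (z x) h else 0) = 0 := by
      intro x hx hxn
      simp only [Finset.mem_Icc] at hx
      simp only [Finset.mem_Ico] at hxn
      rw [if_neg]
      simp only [Finset.mem_Icc]; omega
    rw [← Finset.sum_subset hsub hz0]
    refine Finset.sum_congr rfl fun i hi => if_pos ?_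
    simp only [Finset.mem_Ico] at hi
    exact Finset.mem_Icc.mpr ⟨by omega, hpr⟩
  have hS2 : (∑ i ∈ Finset.Icc 1 r, if p' ∈ Finset.Icc (i + 1) r then
        (-1 : ℝ) ^ (i + p' + 1) * symplecticPairing θ (z i) h else 0)
      = ∑ i ∈ Finset.Ico 1 p', (-1 : ℝ) ^ (i + p' + 1) * symplecticPairing θ (z i) h := by
    have hsub : Finset.Ico 1 p' ⊆ Finset.Icc 1 r := by
      intro x hx
      simp only [Finset.mem_Ico] at hx
      exact Finset.mem_Icc.mpr ⟨hx.1, by omega⟩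
    have hz0 : ∀ x ∈ Finset.Icc 1 r, x ∉ Finset.Ico 1 p' →
        (if p' ∈ Finset.Icc (x + 1) r then
          (-1 : ℝ) ^ (x + p' + 1) * symplecticPairing θ (z x) h else 0) = 0 := by
      intro x hx hxn
      simp only [Finset.mem_Icc] at hx
      simp only [Finset.mem_Ico] at hxn
      rw [if_neg]
      simp only [Finset.mem_Icc]; omega
    rw [← Finset.sum_subset hsub hz0]
    refine Finset.sum_congr rfl fun i hi => if_pos ?_
    simp only [Finset.mem_Ico] at hi
    exact Finset.mem_Icc.mpr ⟨by omega, hp'r⟩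
  have e3 : Finset.Icc (p + 1) r = Finset.Ico (p + 1) (r + 1) := by
    ext k; simp only [Finset.mem_Icc, Finset.mem_Ico]; omega
  have e4 : Finset.Icc (p' + 1) r = Finset.Ico (p' + 1) (r + 1) := by
    ext k; simp only [Finset.mem_Icc, Finset.mem_Ico]; omega
  have esum : Finset.Icc (p + 1) (p' - 1) = Finset.Ico (p + 1) p' := by
    ext k; simp only [Finset.mem_Icc, Finset.mem_Ico]; omega
  -- split the `b`-sum and the `c`-sum
  have hsplit2 : (∑ i ∈ Finset.Ico 1 p', (-1 : ℝ) ^ (i + p' + 1) * symplecticPairing θ (z i) h)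
      = (∑ i ∈ Finset.Ico 1 p, (-1 : ℝ) ^ (i + p' + 1) * symplecticPairing θ (z i) h)
      + (∑ i ∈ Finset.Ico p p', (-1 : ℝ) ^ (i + p' + 1) * symplecticPairing θ (z i) h) :=
    (Finset.sum_Ico_consecutive _ hp hpp'.le).symm
  have hbot : (∑ i ∈ Finset.Ico p p', (-1 : ℝ) ^ (i + p' + 1) * symplecticPairing θ (z i) h)
      = (-1 : ℝ) ^ (p + p' + 1) * symplecticPairing θ (z p) h
      + (∑ i ∈ Finset.Ico (p + 1) p', (-1 : ℝ) ^ (i + p' + 1) * symplecticPairing θ (z i) h) :=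
    Finset.sum_eq_sum_Ico_succ_bot hpp' _
  have hsplit3 : (∑ j ∈ Finset.Ico (p + 1) (r + 1), (-1 : ℝ) ^ (p + j + 1) * symplecticPairing θ h (z j))
      = (∑ j ∈ Finset.Ico (p + 1) p', (-1 : ℝ) ^ (p + j + 1) * symplecticPairing θ h (z j))
      + (∑ j ∈ Finset.Ico p' (r + 1), (-1 : ℝ) ^ (p + j + 1) * symplecticPairing θ h (z j)) :=
    (Finset.sum_Ico_consecutive _ (by omega) (by omega)).symm
  have hbot2 : (∑ j ∈ Finset.Ico p' (r + 1), (-1 : ℝ) ^ (p + j + 1) * symplecticPairing θ h (z j))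
      = (-1 : ℝ) ^ (p + p' + 1) * symplecticPairing θ h (z p')
      + (∑ j ∈ Finset.Ico (p' + 1) (r + 1), (-1 : ℝ) ^ (p + j + 1) * symplecticPairing θ h (z j)) :=
    Finset.sum_eq_sum_Ico_succ_bot (by omega) _
  have hcancel1 : (∑ i ∈ Finset.Ico 1 p, (-1 : ℝ) ^ (i + p + 1) * symplecticPairing θ (z i) h)
      + (∑ i ∈ Finset.Ico 1 p, (-1 : ℝ) ^ (i + p' + 1) * symplecticPairing θ (z i) h) = 0 := by
    rw [← Finset.sum_add_distrib]
    exact Finset.sum_eq_zero fun i _ => by rw [hflip i]; ring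
  have hcancel2 : (∑ j ∈ Finset.Ico (p' + 1) (r + 1), (-1 : ℝ) ^ (p + j + 1) * symplecticPairing θ h (z j))
      + (∑ j ∈ Finset.Ico (p' + 1) (r + 1), (-1 : ℝ) ^ (p' + j + 1) * symplecticPairing θ h (z j)) = 0 := by
    rw [← Finset.sum_add_distrib]
    exact Finset.sum_eq_zero fun j _ => by
      linear_combination symplecticPairing θ h (z j) * hflip j
  have hmid : (∑ i ∈ Finset.Ico (p + 1) p', (-1 : ℝ) ^ (i + p' + 1) * symplecticPairing θ (z i) h)
      + (∑ j ∈ Finset.Ico (p + 1) p', (-1 : ℝ) ^ (p + j + 1) * symplecticPairing θ h (z j)) = 0 := by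
    rw [← Finset.sum_add_distrib]
    have step : ∀ k ∈ Finset.Ico (p + 1) p',
        (-1 : ℝ) ^ (k + p' + 1) * symplecticPairing θ (z k) h
          + (-1 : ℝ) ^ (p + k + 1) * symplecticPairing θ h (z k)
        = (2 * (-1 : ℝ) ^ p) * ((-1 : ℝ) ^ (k + 1) * symplecticPairing θ h (z k)) := by
      intro k _
      rw [sp_swap θ (z k) h, hflip k]; ring
    rw [Finset.sum_congr rfl step, ← Finset.mul_sum]
    have step2 : (∑ k ∈ Finset.Ico (p + 1) p', (-1 : ℝ) ^ (k + 1) * symplecticPairing θ h (z k))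
        = symplecticPairing θ h (∑ k ∈ Finset.Ico (p + 1) p', ((-1 : ℝ) ^ (k + 1)) • z k) := by
      rw [sp_sum_right]
      exact Finset.sum_congr rfl fun k _ => (sp_smul_right θ _ h (z k)).symm
    rw [step2, ← esum, hsum, sp_zero_right, mul_zero]
  have hfinal : (-1 : ℝ) ^ (p + p' + 1) * symplecticPairing θ (z p) h
      + (-1 : ℝ) ^ (p + p' + 1) * symplecticPairing θ h (z p')
      = (-1 : ℝ) ^ (p + p' + 1) * symplecticPairing θ (z p - z p') h := by
    simp only [symplecticPairing, PiLp.sub_apply]; ring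
  rw [expand, hS1, hS2, e3, e4, hsplit2, hbot, hsplit3, hbot2]
  linarith [hcancel1, hcancel2, hmid, hfinal]
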